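/- The group W generated by the elements s_ω (ω ∈ Ω) in F ⋊ Aut(F), with relations s_ω^2 = 1 and s_{ω_1}s_{ω_2} = s_{ω_2}s_{ω_1} for ω_1 ⊆ ω_2, together with the generating set S = {s_ω}, is a right-angled Coxeter system: these relations imply all relations among the s_ω. -/

import Mathlib

/-- `Ω`: the set of nonempty proper subsets of `{1, …, n+1}`. -/
def Om (n : ℕ) : Type := {ω : Finset (Fin (n + 1)) // ω.Nonempty ∧ ω ≠ Finset.univ}

/-- `F = ⟨x_ω, ω ∈ Ω ∣ x_ω² = 1⟩`: the free product of copies of `ℤ/2` indexed by `Ω`. -/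
abbrev FGrp (n : ℕ) : Type := Monoid.CoprodI (fun _ : Om n => Multiplicative (ZMod 2))

/-- The generator `x_ω` of `F`. -/
def xgen {n : ℕ} (ω : Om n) : FGrp n :=
  Monoid.CoprodI.of (i := ω) (Multiplicative.ofAdd (1 : ZMod 2))

open scoped Classical

/-- The right-angled Coxeter relations: `s_ω² = 1` and `s_{ω₁}s_{ω₂} = s_{ω₂}s_{ω₁}`
for `ω₁ ⊆ ω₂`, as elements of the free group on `Ω`. -/
def racgRels (n : ℕ) : Set (FreeGroup (Om n)) :=
  {w | (∃ ω : Om n, w = FreeGroup.of ω * FreeGroup.of ω) ∨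
    ∃ ω₁ ω₂ : Om n, ω₁.1 ⊆ ω₂.1 ∧
      w = FreeGroup.of ω₁ * FreeGroup.of ω₂ * (FreeGroup.of ω₁)⁻¹ * (FreeGroup.of ω₂)⁻¹}

/-! ### Auxiliary lemmas -/

lemma zmod2_cases (x : Multiplicative (ZMod 2)) : x = 1 ∨ x = Multiplicative.ofAdd 1 := by
  revert x; decide

lemma zmod2_mul : (Multiplicative.ofAdd (1 : ZMod 2)) * Multiplicative.ofAdd 1 = 1 := by decide

lemma zmod2_ne : (Multiplicative.ofAdd (1 : ZMod 2)) ≠ 1 := by decide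

lemma xgen_mul_self {n : ℕ} (ω : Om n) : xgen ω * xgen ω = 1 := by
  rw [xgen, ← map_mul, zmod2_mul, map_one]

lemma xgen_cancel {n : ℕ} (ω : Om n) (a : FGrp n) : xgen ω * (xgen ω * a) = a := by
  rw [← mul_assoc, xgen_mul_self, one_mul]

lemma fgrp_hom_ext {n : ℕ} {M : Type*} [Monoid M] (f g : FGrp n →* M)
    (h : ∀ ω, f (xgen ω) = g (xgen ω)) : f = g := by
  apply Monoid.CoprodI.ext_hom
  intro i; refine MonoidHom.ext fun x => ?_
  rcases zmod2_cases x with hx | hx <;> subst hx <;> simp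
  exact h i

lemma mulAut_ext {n : ℕ} (f g : MulAut (FGrp n)) (h : ∀ ω, f (xgen ω) = g (xgen ω)) : f = g := by
  have := fgrp_hom_ext (n := n) f.toMonoidHom g.toMonoidHom h
  ext x
  exact DFunLike.congr_fun this x

/-- The homomorphism from `ℤ/2` determined by an involution. -/
def z2hom {G : Type*} [Monoid G] (t : G) (ht : t * t = 1) : Multiplicative (ZMod 2) →* G where
  toFun x := if x = 1 then 1 else t
  map_one' := if_pos rfl
  map_mul' a b := by
    rcases zmod2_cases a with ha | ha <;> rcases zmod2_cases b with hb | hb <;>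
      subst ha hb <;> simp [zmod2_mul, zmod2_ne, ht]

lemma z2hom_apply {G : Type*} [Monoid G] (t : G) (ht : t * t = 1) :
    z2hom t ht (Multiplicative.ofAdd 1) = t := by
  simp [z2hom, zmod2_ne]

lemma mk_rel_eq_one {n : ℕ} {r : FreeGroup (Om n)} (hr : r ∈ racgRels n) :
    PresentedGroup.mk (racgRels n) r = 1 :=
  (QuotientGroup.eq_one_iff _).2 (Subgroup.subset_normalClosure hr)

lemma of_mul_self {n : ℕ} (ω : Om n) :
    (PresentedGroup.of (rels := racgRels n) ω) * PresentedGroup.of ω = 1 := by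
  have h := mk_rel_eq_one (n := n) (Or.inl ⟨ω, rfl⟩)
  rwa [map_mul] at h

lemma of_comm {n : ℕ} {ω₁ ω₂ : Om n} (h : ω₁.1 ⊆ ω₂.1) :
    (PresentedGroup.of (rels := racgRels n) ω₁) * PresentedGroup.of ω₂ =
      PresentedGroup.of ω₂ * PresentedGroup.of ω₁ := by
  have hh := mk_rel_eq_one (n := n) (Or.inr ⟨ω₁, ω₂, h, rfl⟩)
  simp only [map_mul, map_inv] at hh
  rw [mul_inv_eq_one, mul_inv_eq_iff_eq_mul] at hh
  exact hh

/-- The retraction `ρ : F →* PresentedGroup`, sending `x_ω` to the generator `σ_ω`. -/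
noncomputable def rho (n : ℕ) : FGrp n →* PresentedGroup (racgRels n) :=
  Monoid.CoprodI.lift fun ω => z2hom (PresentedGroup.of ω) (of_mul_self ω)

lemma rho_xgen {n : ℕ} (ω : Om n) : rho n (xgen ω) = PresentedGroup.of ω := by
  rw [xgen, rho, Monoid.CoprodI.lift_of, z2hom_apply]

lemma rho_conj {n : ℕ} {γ ω : Om n} (h : γ.1 ⊆ ω.1) :
    rho n (xgen ω * xgen γ * xgen ω) = PresentedGroup.of γ := by
  simp only [map_mul, rho_xgen]
  rw [mul_assoc, of_comm h, ← mul_assoc, of_mul_self, one_mul]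

lemma rho_psi {n : ℕ} (ω : Om n) (ψω : MulAut (FGrp n))
    (h : ∀ γ : Om n, ψω (xgen γ) =
      if γ.1 ⊆ ω.1 then xgen ω * xgen γ * xgen ω else xgen γ) (g : FGrp n) :
    rho n (ψω g) = rho n g := by
  have key : (rho n).comp ψω.toMonoidHom = rho n := by
    apply fgrp_hom_ext
    intro γ
    simp only [MonoidHom.comp_apply, MulEquiv.coe_toMonoidHom]
    rw [h γ]
    split_ifs with hc
    · rw [rho_conj hc, rho_xgen]
    · rfl
  exact DFunLike.congr_fun key g

/-- The subgroup `W` of `F ⋊ Aut F` generated by the elements `s_ω`, together with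
`S = {s_ω}`, is a right-angled Coxeter system: the relations `s_ω² = 1` and
`s_{ω₁}s_{ω₂} = s_{ω₂}s_{ω₁}` (`ω₁ ⊆ ω₂`) imply all relations among the `s_ω`, i.e. `W` is
isomorphic to the correspondingly presented group, by an isomorphism matching the generators. -/
theorem racg_presentation (n : ℕ) (ψ : Om n → MulAut (FGrp n))
    (hψ : ∀ ω γ : Om n, ψ ω (xgen γ) =
      if γ.1 ⊆ ω.1 then xgen ω * xgen γ * xgen ω else xgen γ)
    (s : Om n → FGrp n ⋊[MonoidHom.id (MulAut (FGrp n))] MulAut (FGrp n))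
    (hs : ∀ ω, s ω = SemidirectProduct.inl (xgen ω) * SemidirectProduct.inr (ψ ω)) :
    ∃ e : PresentedGroup (racgRels n) ≃* Subgroup.closure (Set.range s),
      ∀ ω : Om n, (e (PresentedGroup.of ω) :
        FGrp n ⋊[MonoidHom.id (MulAut (FGrp n))] MulAut (FGrp n)) = s ω := by
  -- `ψ ω` fixes `x_ω`
  have hψω : ∀ ω : Om n, ψ ω (xgen ω) = xgen ω := by
    intro ω
    rw [hψ, if_pos (subset_refl _), xgen_mul_self, one_mul]
  -- `ψ ω` is an involution
  have hψsq : ∀ ω : Om n, ψ ω * ψ ω = 1 := by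
    intro ω
    apply mulAut_ext
    intro γ
    simp only [MulAut.mul_apply, MulAut.one_apply]
    by_cases h : γ.1 ⊆ ω.1
    · rw [hψ ω γ, if_pos h]
      simp only [map_mul, hψω, hψ ω γ, if_pos h]
      simp [mul_assoc, xgen_cancel, xgen_mul_self]
    · rw [hψ ω γ, if_neg h, hψ ω γ, if_neg h]
  -- nested `ψ`'s commute
  have hψcomm : ∀ ω₁ ω₂ : Om n, ω₁.1 ⊆ ω₂.1 → ψ ω₁ * ψ ω₂ = ψ ω₂ * ψ ω₁ := by
    intro ω₁ ω₂ h12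
    by_cases heq : ω₁ = ω₂
    · subst heq; rfl
    have hne21 : ¬ ω₂.1 ⊆ ω₁.1 := fun hsub =>
      heq (Subtype.ext (Finset.Subset.antisymm h12 hsub))
    apply mulAut_ext
    intro γ
    simp only [MulAut.mul_apply]
    by_cases h1 : γ.1 ⊆ ω₁.1 <;> by_cases h2 : γ.1 ⊆ ω₂.1
    · simp [map_mul, hψ, h1, h2, h12, hne21, mul_assoc, xgen_cancel, xgen_mul_self]
    · exact absurd (h1.trans h12) h2
    · simp [map_mul, hψ, h1, h2, hne21]
    · simp [hψ, h1, h2]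
  -- the generators `s ω` are involutions
  have hssq : ∀ ω : Om n, s ω * s ω = 1 := by
    intro ω
    rw [hs]
    refine SemidirectProduct.ext ?_ ?_
    · simp [SemidirectProduct.mul_left, hψω, xgen_mul_self]
    · simp [SemidirectProduct.mul_right, hψsq ω]
  -- nested generators commute
  have hscomm : ∀ ω₁ ω₂ : Om n, ω₁.1 ⊆ ω₂.1 → s ω₁ * s ω₂ = s ω₂ * s ω₁ := by
    intro ω₁ ω₂ h12
    by_cases heq : ω₁ = ω₂
    · subst heq; rfl
    have hne21 : ¬ ω₂.1 ⊆ ω₁.1 := fun hsub =>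
      heq (Subtype.ext (Finset.Subset.antisymm h12 hsub))
    rw [hs, hs]
    refine SemidirectProduct.ext ?_ ?_
    · simp only [SemidirectProduct.mul_left, SemidirectProduct.mul_right,
        SemidirectProduct.left_inl, SemidirectProduct.right_inl, SemidirectProduct.left_inr,
        SemidirectProduct.right_inr, MonoidHom.id_apply, map_one, mul_one, one_mul,
        MulAut.one_apply]
      rw [hψ ω₁ ω₂, if_neg hne21, hψ ω₂ ω₁, if_pos h12]
      rw [← mul_assoc, ← mul_assoc, xgen_mul_self, one_mul]
    · simp only [SemidirectProduct.mul_right, SemidirectProduct.right_inl,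
        SemidirectProduct.right_inr, one_mul, mul_one]
      exact hψcomm ω₁ ω₂ h12
  -- the presented group maps to the semidirect product
  have hrel : ∀ r ∈ racgRels n, FreeGroup.lift s r = 1 := by
    intro r hr
    rcases hr with ⟨ω, rfl⟩ | ⟨ω₁, ω₂, h12, rfl⟩
    · rw [map_mul, FreeGroup.lift_apply_of]
      exact hssq ω
    · simp only [map_mul, map_inv, FreeGroup.lift_apply_of]
      rw [mul_inv_eq_one, mul_inv_eq_iff_eq_mul]
      exact hscomm ω₁ ω₂ h12
  set φP := PresentedGroup.toGroup hrel with hφP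
  have hφof : ∀ ω : Om n, φP (PresentedGroup.of ω) = s ω := fun ω =>
    PresentedGroup.toGroup.of hrel
  -- the key subgroup for the retraction argument
  set H : Subgroup (PresentedGroup (racgRels n)) :=
    { carrier := {p | rho n ((φP p).left) = p ∧ ∀ g : FGrp n, rho n ((φP p).right g) = rho n g}
      one_mem' := by
        constructor
        · simp
        · intro g; simp
      mul_mem' := by
        rintro p q ⟨hp1, hp2⟩ ⟨hq1, hq2⟩
        constructor
        · rw [map_mul, SemidirectProduct.mul_left, map_mul, MonoidHom.id_apply, hp1, hp2, hq1]
        · intro g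
          rw [map_mul, SemidirectProduct.mul_right, MulAut.mul_apply, hp2, hq2]
      inv_mem' := by
        rintro p ⟨hp1, hp2⟩
        have hp2' : ∀ g : FGrp n, rho n (((φP p).right)⁻¹ g) = rho n g := by
          intro g
          have := hp2 (((φP p).right)⁻¹ g)
          rw [MulAut.apply_inv_self] at this
          exact this.symm
        constructor
        · rw [map_inv, SemidirectProduct.inv_left, MonoidHom.id_apply, hp2', map_inv, hp1]
        · intro g
          rw [map_inv, SemidirectProduct.inv_right]
          exact hp2' g } with hH
  have hgen : ∀ ω : Om n, PresentedGroup.of ω ∈ H := by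
    intro ω
    have hleft : (φP (PresentedGroup.of ω)).left = xgen ω := by
      rw [hφof, hs]; simp
    have hright : (φP (PresentedGroup.of ω)).right = ψ ω := by
      rw [hφof, hs]; simp
    constructor
    · rw [hleft, rho_xgen]
    · intro g
      rw [hright]
      exact rho_psi ω (ψ ω) (hψ ω) g
  have key : ∀ p : PresentedGroup (racgRels n), rho n ((φP p).left) = p := by
    intro p
    exact (PresentedGroup.generated_by (racgRels n) H hgen p).1
  have hinj : Function.Injective φP := by
    intro p q h
    rw [← key p, ← key q, h]
  have hrange : φP.range = Subgroup.closure (Set.range s) := by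
    rw [MonoidHom.range_eq_map, ← PresentedGroup.closure_range_of (racgRels n),
      MonoidHom.map_closure]
    congr 1
    rw [← Set.range_comp]
    exact congrArg _ (funext fun ω => hφof ω)
  refine ⟨(MonoidHom.ofInjective hinj).trans (MulEquiv.subgroupCongr hrange), fun ω => ?_⟩
  rw [MulEquiv.trans_apply, MulEquiv.subgroupCongr_apply, MonoidHom.ofInjective_apply, hφof]
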